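/- Let (g,J) be a quasi-Kähler Chern-flat Lie algebra with center z of complex dimension 1, dim_C g = n. Then there exists a basis Z₁,...,Zₙ of g^{1,0} such that Z̄ₙ generates z^{0,1} and [Zᵢ,Zⱼ] = Z̄ₙ for all 1 ≤ i < j ≤ n-1. -/

import Mathlib

open Module

universe u in
theorem sympAllOnes : ∀ (m : ℕ) (V : Type u) [AddCommGroup V] [Module ℂ V]
    [FiniteDimensional ℂ V] (ω : V →ₗ[ℂ] V →ₗ[ℂ] ℂ),
    finrank ℂ V = m → (∀ v, ω v v = 0) → (∀ v : V, (∀ w, ω v w = 0) → v = 0) →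
    ∃ e : Basis (Fin m) ℂ V, ∀ i j : Fin m, i < j → ω (e i) (e j) = 1 := by
  intro m
  induction m using Nat.strong_induction_on with
  | _ m ih =>
  intro V _ _ _ ω hdim halt hnd
  have hskew : ∀ a b : V, ω a b = -ω b a := by
    intro a b
    have h := halt (a + b)
    simp only [map_add, LinearMap.add_apply, halt a, halt b] at h
    linear_combination h
  rcases Nat.eq_zero_or_pos m with hm0 | hm1
  · subst hm0
    have : Subsingleton V := by
      rw [← finrank_zero_iff (R := ℂ)]; exact hdim
    exact ⟨Basis.empty V, fun i j _ => absurd i.2 (by omega)⟩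
  -- m ≥ 1 : pick u ≠ 0
  have : Nontrivial V := by
    rw [← finrank_pos_iff (R := ℂ)]; omega
  obtain ⟨u, hu0⟩ := exists_ne (0 : V)
  have hex : ∃ w, ω u w ≠ 0 := by
    by_contra h
    push_neg at h
    exact hu0 (hnd u h)
  obtain ⟨w0, hw0⟩ := hex
  set v : V := (ω u w0)⁻¹ • w0 with hv
  have huv : ω u v = 1 := by
    simp [hv, map_smul, inv_mul_cancel₀ hw0]
  have hvu : ω v u = -1 := by rw [hskew, huv]
  -- u, v linearly independent so m ≥ 2
  have hli : LinearIndependent ℂ ![u, v] := by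
    rw [LinearIndependent.pair_iff]
    intro s t hst
    have h1 : ω u (s • u + t • v) = 0 := by rw [hst]; simp
    have h2 : ω v (s • u + t • v) = 0 := by rw [hst]; simp
    simp only [map_add, map_smul, smul_eq_mul, halt, huv, hvu, mul_zero, mul_one,
      mul_neg, zero_add, add_zero] at h1 h2
    constructor
    · linear_combination -h2
    · exact h1
  have hm2 : 2 ≤ m := by
    have := hli.fintype_card_le_finrank (R := ℂ)
    simpa [hdim] using this
  -- the kernel W
  set φ : V →ₗ[ℂ] ℂ × ℂ := LinearMap.prod (ω u) (ω v) with hφ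
  have hφsurj : Function.Surjective φ := by
    intro c
    refine ⟨c.1 • v - c.2 • u, ?_⟩
    simp [hφ, LinearMap.prod_apply, map_sub, map_smul, huv, hvu, halt, Prod.ext_iff]
  set W : Submodule ℂ V := LinearMap.ker φ with hW
  have hWrank : finrank ℂ W = m - 2 := by
    have h := LinearMap.finrank_range_add_finrank_ker φ
    rw [LinearMap.range_eq_top.mpr hφsurj, finrank_top, hdim] at h
    rw [Module.finrank_prod, finrank_self, ← hW] at h
    omega
  have hmemW : ∀ x : V, x ∈ W ↔ ω u x = 0 ∧ ω v x = 0 := by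
    intro x
    rw [hW, LinearMap.mem_ker, hφ, LinearMap.prod_apply, Prod.mk_eq_zero]
    rfl
  -- the decomposition x' ∈ W
  have hdecomp : ∀ x : V, x - (ω u x) • v + (ω v x) • u ∈ W := by
    intro x
    rw [hmemW]
    constructor
    · simp only [map_add, map_sub, map_smul, smul_eq_mul, huv, halt]
      ring
    · simp only [map_add, map_sub, map_smul, smul_eq_mul, hvu, halt]
      ring
  -- restricted form
  set ωW : W →ₗ[ℂ] W →ₗ[ℂ] ℂ := (ω.domRestrict W).compl₂ W.subtype with hωW
  have hωWapp : ∀ a b : W, ωW a b = ω a b := fun a b => rfl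
  have hWalt : ∀ a : W, ωW a a = 0 := fun a => halt a
  have hWnd : ∀ a : W, (∀ b, ωW a b = 0) → a = 0 := by
    intro a ha
    have hau : ω (a : V) u = 0 := by
      rw [hskew]; have := ((hmemW a).mp a.2).1; rw [this, neg_zero]
    have hav : ω (a : V) v = 0 := by
      rw [hskew]; have := ((hmemW a).mp a.2).2; rw [this, neg_zero]
    have key : ∀ x : V, ω (a : V) x = 0 := by
      intro x
      have hx' := hdecomp x
      have h0 : ω (a : V) (x - (ω u x) • v + (ω v x) • u) = 0 := ha ⟨_, hx'⟩
      simp only [map_add, map_sub, map_smul, smul_eq_mul, hau, hav, mul_zero,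
        sub_zero, add_zero] at h0
      exact h0
    have : (a : V) = 0 := hnd _ key
    exact Subtype.ext this
  obtain ⟨fb, hfb⟩ := ih (m - 2) (by omega) W ωW hWrank hWalt hWnd
  have hfbu : ∀ k, ω u (fb k : V) = 0 := fun k => ((hmemW _).mp (fb k).2).1
  have hfbv : ∀ k, ω v (fb k : V) = 0 := fun k => ((hmemW _).mp (fb k).2).2
  -- the new family
  set e : Fin m → V := fun i =>
    if h0 : (i : ℕ) = 0 then u else if h1 : (i : ℕ) = 1 then v
    else (fb ⟨(i : ℕ) - 2, by omega⟩ : V) - u + v with he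
  have he0 : e ⟨0, by omega⟩ = u := by simp [he]
  have he1 : e ⟨1, by omega⟩ = v := by simp [he]
  have hek : ∀ (k : ℕ) (hk : k + 2 < m),
      e ⟨k + 2, hk⟩ = (fb ⟨k, by omega⟩ : V) - u + v := by
    intro k hk; simp [he]
  -- spanning
  have hspan : ⊤ ≤ Submodule.span ℂ (Set.range e) := by
    set S := Submodule.span ℂ (Set.range e) with hS
    have huS : u ∈ S := he0 ▸ Submodule.subset_span ⟨_, rfl⟩
    have hvS : v ∈ S := he1 ▸ Submodule.subset_span ⟨_, rfl⟩
    have hfS : ∀ k : Fin (m - 2), (fb k : V) ∈ S := by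
      intro k
      have hk2 : (k : ℕ) + 2 < m := by omega
      have : e ⟨(k : ℕ) + 2, hk2⟩ = (fb k : V) - u + v := by
        rw [hek (k : ℕ) hk2]
      have heS : (fb k : V) - u + v ∈ S := this ▸ Submodule.subset_span ⟨_, rfl⟩
      have : (fb k : V) = ((fb k : V) - u + v) + u - v := by abel
      rw [this]
      exact Submodule.sub_mem _ (Submodule.add_mem _ heS huS) hvS
    have hWS : (W : Submodule ℂ V) ≤ S := by
      have hsp : Submodule.span ℂ (Set.range (fun k => (fb k : V))) = W := by
        have := fb.span_eq
        have h2 : Set.range (fun k => (fb k : V)) = W.subtype '' (Set.range fb) := by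
          rw [← Set.range_comp]; rfl
        rw [h2, Submodule.span_image, fb.span_eq, Submodule.map_subtype_top]
      rw [← hsp]
      rw [Submodule.span_le]
      rintro x ⟨k, rfl⟩
      exact hfS k
    intro x _
    have hx' := hdecomp x
    have : x = (x - (ω u x) • v + (ω v x) • u) + (ω u x) • v - (ω v x) • u := by abel
    rw [this]
    exact Submodule.sub_mem _ (Submodule.add_mem _ (hWS hx')
      (Submodule.smul_mem _ _ hvS)) (Submodule.smul_mem _ _ huS)
  have hcard : Fintype.card (Fin m) = finrank ℂ V := by simp [hdim]
  refine ⟨basisOfTopLeSpanOfCardEqFinrank e hspan hcard, ?_⟩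
  have heval2 : ∀ (k : ℕ) (hk : k < m) (h2 : 2 ≤ k),
      e ⟨k, hk⟩ = (fb ⟨k - 2, by omega⟩ : V) - u + v := by
    intro k hk h2
    simp only [he]
    rw [dif_neg (by omega), dif_neg (by omega)]
  have heval0 : ∀ (hk : 0 < m), e ⟨0, hk⟩ = u := by
    intro hk
    simp only [he]
    norm_num
  have heval1 : ∀ (hk : 1 < m), e ⟨1, hk⟩ = v := by
    intro hk
    simp only [he]
    norm_num
  have hωuu : ω u u = 0 := halt u
  have hωvv : ω v v = 0 := halt v
  have hfbu' : ∀ k, ω (fb k : V) u = 0 := by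
    intro k; rw [hskew, hfbu, neg_zero]
  have hfbv' : ∀ k, ω (fb k : V) v = 0 := by
    intro k; rw [hskew, hfbv, neg_zero]
  rintro ⟨iv, hi⟩ ⟨jv, hj⟩ hij
  have hij' : iv < jv := hij
  rw [coe_basisOfTopLeSpanOfCardEqFinrank]
  by_cases hj2 : 2 ≤ jv
  · rw [heval2 jv hj hj2]
    by_cases hi2 : 2 ≤ iv
    · rw [heval2 iv hi hi2]
      have hlt : (⟨iv - 2, by omega⟩ : Fin (m - 2)) < ⟨jv - 2, by omega⟩ := by
        simp only [Fin.mk_lt_mk]; omega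
      have h1 : ω (fb ⟨iv - 2, by omega⟩ : V) (fb ⟨jv - 2, by omega⟩ : V) = 1 :=
        hfb _ _ hlt
      simp only [map_add, map_sub, LinearMap.add_apply, LinearMap.sub_apply,
        h1, hfbu, hfbv, hfbu', hfbv', huv, hvu, hωuu, hωvv]
      ring
    · have : iv = 0 ∨ iv = 1 := by omega
      rcases this with h0 | h1
      · subst h0
        rw [heval0 hi]
        simp only [map_add, map_sub, hfbu, huv, hωuu]
        ring
      · subst h1
        rw [heval1 hi]
        simp only [map_add, map_sub, hfbv, hvu, hωvv]
        ring
  · have hj1 : jv = 1 := by omega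
    have hi0 : iv = 0 := by omega
    subst hj1; subst hi0
    rw [heval0 hi, heval1 hj, huv]



/-- Classification with one-dimensional center: let `L = g ⊗ ℂ` be the
complexification of a quasi-Kähler Chern-flat Lie algebra `(g, J)`, presented
abstractly as a complex Lie algebra `L` with conjugation `σ` and complementary
complex subspaces `p = g^{1,0}`, `q = g^{0,1}` swapped by `σ`, satisfying
`[p, q] = 0` and `[p, p] ⊆ q`.  Assume the center of `g` has complex dimension
one, i.e. the center of `L` has complex dimension `2`, and `dim_ℂ p = n`.
Then `p` has a basis `Z₀, …, Z_{n-1}` with `Z_{n-1}` central (so `σ Z_{n-1}`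
generates `z^{0,1}`) and `[Zᵢ, Zⱼ] = σ Z_{n-1}` for all `i < j ≤ n - 2`. -/
theorem qkcf_center_dim_one_classification
    (L : Type*) [LieRing L] [LieAlgebra ℂ L] [Module ℝ L]
    [IsScalarTower ℝ ℂ L] [FiniteDimensional ℂ L] (n : ℕ) (hn0 : 0 < n)
    (σ : L →ₗ[ℝ] L)
    (hσσ : ∀ u : L, σ (σ u) = u)
    (hσsmul : ∀ (c : ℂ) (u : L), σ (c • u) = (starRingEnd ℂ) c • σ u)
    (hσbr : ∀ u v : L, σ ⁅u, v⁆ = ⁅σ u, σ v⁆)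
    (p q : Submodule ℂ L) (hpq : IsCompl p q)
    (hσp : ∀ u ∈ p, σ u ∈ q) (hσq : ∀ u ∈ q, σ u ∈ p)
    (hCF : ∀ u ∈ p, ∀ v ∈ q, ⁅u, v⁆ = (0 : L))
    (hQK : ∀ u ∈ p, ∀ v ∈ p, ⁅u, v⁆ ∈ q)
    (hdim : Module.finrank ℂ p = n)
    (hcen : Module.finrank ℂ (LieAlgebra.center ℂ L : LieIdeal ℂ L) = 2) :
    ∃ Z : Fin n → L, (∀ i, Z i ∈ p) ∧ LinearIndependent ℂ Z ∧
      Submodule.span ℂ (Set.range Z) = p ∧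
      Z ⟨n - 1, by omega⟩ ∈ LieAlgebra.center ℂ L ∧
      (∀ i j : Fin n, (i : ℕ) < (j : ℕ) → (j : ℕ) < n - 1 →
        ⁅Z i, Z j⁆ = σ (Z ⟨n - 1, by omega⟩)) := by
  classical
  set z : Submodule ℂ L := ((LieAlgebra.center ℂ L : LieIdeal ℂ L) : Submodule ℂ L) with hzdef
  have hzmem : ∀ x : L, x ∈ z ↔ ∀ y : L, ⁅y, x⁆ = 0 := fun x =>
    LieModule.mem_maxTrivSubmodule ℂ L L x
  have hcen' : finrank ℂ z = 2 := hcen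
  have hdecL : ∀ x : L, ∃ a ∈ p, ∃ b ∈ q, x = a + b := by
    intro x
    have hx : x ∈ p ⊔ q := by rw [hpq.sup_eq_top]; trivial
    rcases Submodule.mem_sup.mp hx with ⟨a, ha, b, hb, h⟩
    exact ⟨a, ha, b, hb, h.symm⟩
  have hCF' : ∀ u ∈ q, ∀ v ∈ p, ⁅u, v⁆ = (0 : L) := by
    intro u hu v hv
    rw [← lie_skew, hCF v hv u hu, neg_zero]
  -- brackets of p with p are central
  have hA : ∀ u ∈ p, ∀ v ∈ p, ⁅u, v⁆ ∈ z := by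
    intro u hu v hv
    rw [hzmem]
    intro y
    rcases hdecL y with ⟨a, ha, b, hb, rfl⟩
    rw [add_lie]
    have h1 : ⁅a, ⁅u, v⁆⁆ = 0 := hCF a ha _ (hQK u hu v hv)
    have h2 : ⁅b, ⁅u, v⁆⁆ = 0 := by
      rw [leibniz_lie, hCF' b hb u hu, hCF' b hb v hv]
      simp
    rw [h1, h2, add_zero]
  -- σ preserves the center
  have hσz : ∀ x ∈ z, σ x ∈ z := by
    intro x hx
    rw [hzmem] at hx ⊢
    intro y
    have h : ⁅y, σ x⁆ = σ ⁅σ y, x⁆ := by rw [hσbr, hσσ]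
    rw [h, hx (σ y), map_zero]
  set zp : Submodule ℂ L := z ⊓ p with hzpdef
  set zq : Submodule ℂ L := z ⊓ q with hzqdef
  -- decomposition of central elements
  have hzdec : ∀ x ∈ z, ∃ a, a ∈ zp ∧ x - a ∈ zq := by
    intro x hx
    rcases hdecL x with ⟨a, ha, b, hb, rfl⟩
    have haz : a ∈ z := by
      rw [hzmem]
      intro y
      rcases hdecL y with ⟨c, hc, d, hd, rfl⟩
      rw [add_lie]
      have h1 : ⁅d, a⁆ = 0 := hCF' d hd a ha
      have h2 : ⁅c, a⁆ = 0 := by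
        have h3 : ⁅c, a + b⁆ = 0 := (hzmem _).mp hx c
        rw [lie_add, hCF c hc b hb, add_zero] at h3
        exact h3
      rw [h1, h2, add_zero]
    refine ⟨a, ⟨haz, ha⟩, ?_, ?_⟩
    · exact z.sub_mem hx haz
    · have h : a + b - a = b := by abel
      rw [h]; exact hb
  have hzsup : z = zp ⊔ zq := by
    apply le_antisymm
    · intro x hx
      rcases hzdec x hx with ⟨a, hap, hbq⟩
      have h : x = a + (x - a) := by abel
      rw [h]
      exact Submodule.add_mem _ (Submodule.mem_sup_left hap) (Submodule.mem_sup_right hbq)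
    · exact sup_le inf_le_left inf_le_left
  have hzinf : zp ⊓ zq = ⊥ := by
    have h : zp ⊓ zq ≤ p ⊓ q := inf_le_inf inf_le_right inf_le_right
    rw [hpq.inf_eq_bot] at h
    exact le_bot_iff.mp h
  have hsum : finrank ℂ zp + finrank ℂ zq = 2 := by
    have h := Submodule.finrank_sup_add_finrank_inf_eq zp zq
    rw [hzinf, ← hzsup, hcen', finrank_bot] at h
    omega
  have hzpbot : zp ≠ ⊥ := by
    intro hbot
    have hzqbot : zq = ⊥ := by
      rw [eq_bot_iff]
      intro x hx
      have hσx : σ x ∈ zp := ⟨hσz x hx.1, hσq x hx.2⟩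
      rw [hbot, Submodule.mem_bot] at hσx
      have h := congrArg σ hσx
      rw [hσσ, map_zero] at h
      simp [h]
    rw [hbot, hzqbot, finrank_bot] at hsum
    omega
  obtain ⟨Zn, hZnzp, hZn0⟩ := (Submodule.ne_bot_iff zp).mp hzpbot
  have hZnz : Zn ∈ z := hZnzp.1
  have hZnp : Zn ∈ p := hZnzp.2
  have hzqbot : zq ≠ ⊥ := by
    intro hbot
    have hσZn : σ Zn ∈ zq := ⟨hσz Zn hZnz, hσp Zn hZnp⟩
    rw [hbot, Submodule.mem_bot] at hσZn
    have h := congrArg σ hσZn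
    rw [hσσ, map_zero] at h
    exact hZn0 h
  have hzp1 : finrank ℂ zp = 1 := by
    have h1 : finrank ℂ zp ≠ 0 := by
      exact fun h0 => hzpbot (Submodule.finrank_eq_zero.mp h0)
    have h2 : finrank ℂ zq ≠ 0 := by
      exact fun h0 => hzqbot (Submodule.finrank_eq_zero.mp h0)
    omega
  have hzq1 : finrank ℂ zq = 1 := by omega
  have hspanZn : Submodule.span ℂ {Zn} = zp := by
    apply Submodule.eq_of_le_of_finrank_eq
    · rw [Submodule.span_singleton_le_iff_mem]; exact hZnzp
    · rw [finrank_span_singleton hZn0, hzp1]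
  have hZncen : Zn ∈ LieAlgebra.center ℂ L :=
    (LieModule.mem_maxTrivSubmodule ℂ L L Zn).mpr ((hzmem Zn).mp hZnz)
  -- case n = 1
  rcases Nat.lt_or_ge n 2 with hn | hn2
  · have hn1 : n = 1 := by omega
    subst hn1
    have hpzp : zp = p :=
      Submodule.eq_of_le_of_finrank_eq inf_le_right (by rw [hzp1, hdim])
    refine ⟨fun _ => Zn, fun _ => hZnp, ?_, ?_, ?_, ?_⟩
    · exact linearIndependent_unique_iff.mpr hZn0
    · rw [Set.range_const, hspanZn, hpzp]
    · exact hZncen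
    · intro i j hij hjlt
      omega
  -- case n ≥ 2
  · set W : L := σ Zn with hWdef
    have hWq : W ∈ q := hσp Zn hZnp
    have hWz : W ∈ z := hσz Zn hZnz
    have hW0 : W ≠ 0 := by
      intro h
      apply hZn0
      rw [← hσσ Zn, ← hWdef, h, map_zero]
    have hspanW : Submodule.span ℂ {W} = zq := by
      apply Submodule.eq_of_le_of_finrank_eq
      · rw [Submodule.span_singleton_le_iff_mem]; exact ⟨hWz, hWq⟩
      · rw [finrank_span_singleton hW0, hzq1]
    -- a linear functional with f W = 1
    have hliW : LinearIndepOn ℂ id ({W} : Set L) :=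
      LinearIndepOn.singleton hW0
    set B := Basis.extend hliW with hBdef
    have hWmem : W ∈ hliW.extend (Set.subset_univ _) :=
      hliW.subset_extend _ rfl
    set f : L →ₗ[ℂ] ℂ := B.coord ⟨W, hWmem⟩ with hfdef
    have hfW : f W = 1 := by
      have h : B ⟨W, hWmem⟩ = W := Basis.extend_apply_self hliW ⟨W, hWmem⟩
      have h2 := B.repr_self ⟨W, hWmem⟩
      rw [h] at h2
      rw [hfdef, Basis.coord_apply, h2, Finsupp.single_eq_same]
    have hbr : ∀ u ∈ p, ∀ v ∈ p, ⁅u, v⁆ = f ⁅u, v⁆ • W := by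
      intro u hu v hv
      have h : ⁅u, v⁆ ∈ Submodule.span ℂ {W} := by
        rw [hspanW]; exact ⟨hA u hu v hv, hQK u hu v hv⟩
      rcases Submodule.mem_span_singleton.mp h with ⟨c, hc⟩
      rw [← hc, map_smul, smul_eq_mul, hfW, mul_one]
    -- work inside p
    set zpP : Submodule ℂ ↥p := zp.comap p.subtype with hzpPdef
    obtain ⟨C, hC⟩ := Submodule.exists_isCompl zpP
    have hzpP1 : finrank ℂ zpP = 1 := by
      have e := Submodule.comapSubtypeEquivOfLe (inf_le_right : zp ≤ p)
      rw [e.finrank_eq]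
      exact hzp1
    have hCrank : finrank ℂ C = n - 1 := by
      have h := Submodule.finrank_sup_add_finrank_inf_eq zpP C
      rw [hC.sup_eq_top, hC.inf_eq_bot, finrank_top, finrank_bot, hdim, hzpP1] at h
      omega
    set ωC : ↥C →ₗ[ℂ] ↥C →ₗ[ℂ] ℂ := LinearMap.mk₂ ℂ
      (fun a b : ↥C => f ⁅((a : ↥p) : L), ((b : ↥p) : L)⁆)
      (by intro a a' b; simp [add_lie])
      (by intro c a b; simp [smul_lie])
      (by intro a b b'; simp [lie_add])
      (by intro c a b; simp [lie_smul]) with hωCdef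
    have hωCapp : ∀ a b : ↥C, ωC a b = f ⁅((a : ↥p) : L), ((b : ↥p) : L)⁆ :=
      fun a b => rfl
    have hωCalt : ∀ a : ↥C, ωC a a = 0 := by
      intro a
      rw [hωCapp, lie_self, map_zero]
    have hωCnd : ∀ a : ↥C, (∀ b, ωC a b = 0) → a = 0 := by
      intro a ha
      set x : L := ((a : ↥p) : L) with hxdef
      have hxp : x ∈ p := (a : ↥p).2
      have hxz : x ∈ z := by
        rw [hzmem]
        intro y
        rcases hdecL y with ⟨c, hc, d, hd, rfl⟩
        rw [add_lie]
        have h2 : ⁅d, x⁆ = 0 := hCF' d hd x hxp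
        have h1 : ⁅c, x⁆ = 0 := by
          have hcP : (⟨c, hc⟩ : ↥p) ∈ zpP ⊔ C := by rw [hC.sup_eq_top]; trivial
          rcases Submodule.mem_sup.mp hcP with ⟨s, hs, t, ht, hst⟩
          have hcval : c = ((s : L)) + ((t : L)) := by
            have h := congrArg (Subtype.val) hst
            simpa using h.symm
          rw [hcval, add_lie]
          have h3 : ⁅(s : L), x⁆ = 0 := by
            have hsz : (s : L) ∈ z := (Submodule.mem_comap.mp hs).1
            rw [← lie_skew, (hzmem _).mp hsz x, neg_zero]
          have h4 : ⁅(t : L), x⁆ = 0 := by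
            have h5 : ⁅x, (t : L)⁆ = 0 := by
              have h6 := ha ⟨t, ht⟩
              rw [hωCapp] at h6
              have h7 := hbr x hxp (t : L) t.2
              rw [h6, zero_smul] at h7
              exact h7
            rw [← lie_skew, h5, neg_zero]
          rw [h3, h4, add_zero]
        rw [h1, h2, add_zero]
      have hmem : (a : ↥p) ∈ zpP ⊓ C := by
        refine ⟨Submodule.mem_comap.mpr ⟨hxz, hxp⟩, a.2⟩
      rw [hC.inf_eq_bot, Submodule.mem_bot] at hmem
      exact Subtype.ext hmem
    obtain ⟨fb, hfb⟩ := sympAllOnes (n - 1) ↥C ωC hCrank hωCalt hωCnd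
    -- the family inside p
    set Z' : Fin n → ↥p := fun i =>
      if h : (i : ℕ) < n - 1 then ((fb ⟨(i : ℕ), h⟩ : ↥C) : ↥p) else ⟨Zn, hZnp⟩
      with hZ'def
    have hZ'lt : ∀ (i : Fin n) (h : (i : ℕ) < n - 1),
        Z' i = ((fb ⟨(i : ℕ), h⟩ : ↥C) : ↥p) := by
      intro i h
      simp only [hZ'def]
      rw [dif_pos h]
    have hZ'last : ∀ (hk : n - 1 < n), Z' ⟨n - 1, hk⟩ = ⟨Zn, hZnp⟩ := by
      intro hk
      simp only [hZ'def]
      rw [dif_neg (by omega)]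
    have hspan' : ⊤ ≤ Submodule.span ℂ (Set.range Z') := by
      rw [← hC.sup_eq_top]
      apply sup_le
      · intro x hx
        have hxzp : (x : L) ∈ Submodule.span ℂ {Zn} := by
          rw [hspanZn]; exact Submodule.mem_comap.mp hx
        rcases Submodule.mem_span_singleton.mp hxzp with ⟨c, hc⟩
        have h : x = c • (⟨Zn, hZnp⟩ : ↥p) := by
          apply Subtype.ext
          simp [← hc]
        rw [h, ← hZ'last (by omega)]
        exact Submodule.smul_mem _ _ (Submodule.subset_span ⟨_, rfl⟩)
      · have hsp : Submodule.span ℂ (Set.range (fun k : Fin (n - 1) =>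
            ((fb k : ↥C) : ↥p))) = C := by
          have h2 : Set.range (fun k : Fin (n - 1) => ((fb k : ↥C) : ↥p))
              = C.subtype '' (Set.range fb) := by
            rw [← Set.range_comp]; rfl
          rw [h2, Submodule.span_image, fb.span_eq, Submodule.map_subtype_top]
        rw [← hsp, Submodule.span_le]
        rintro _ ⟨k, rfl⟩
        apply Submodule.subset_span
        refine ⟨⟨(k : ℕ), by omega⟩, ?_⟩
        rw [hZ'lt ⟨(k : ℕ), by omega⟩ k.2]
    have hcard : Fintype.card (Fin n) = finrank ℂ ↥p := by simp [hdim]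
    have hZ'li : LinearIndependent ℂ Z' := by
      have h := (basisOfTopLeSpanOfCardEqFinrank Z' hspan' hcard).linearIndependent
      rwa [coe_basisOfTopLeSpanOfCardEqFinrank] at h
    have hZ'span : Submodule.span ℂ (Set.range Z') = ⊤ := le_antisymm le_top hspan'
    refine ⟨fun i => ((Z' i : ↥p) : L), fun i => (Z' i).2, ?_, ?_, ?_, ?_⟩
    · exact hZ'li.map' p.subtype (Submodule.ker_subtype p)
    · have h : Set.range (fun i => ((Z' i : ↥p) : L)) = p.subtype '' Set.range Z' := by
        rw [← Set.range_comp]; rfl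
      rw [h, Submodule.span_image, hZ'span, Submodule.map_subtype_top]
    · show ((Z' ⟨n - 1, by omega⟩ : ↥p) : L) ∈ LieAlgebra.center ℂ L
      rw [hZ'last (by omega)]
      exact hZncen
    · intro i j hij hjn
      have hi : (i : ℕ) < n - 1 := by omega
      show ⁅((Z' i : ↥p) : L), ((Z' j : ↥p) : L)⁆ = σ ((Z' ⟨n - 1, by omega⟩ : ↥p) : L)
      rw [hZ'lt i hi, hZ'lt j hjn, hZ'last (by omega)]
      have hab := hbr ((fb ⟨(i : ℕ), hi⟩ : ↥C) : L)
        ((fb ⟨(i : ℕ), hi⟩ : ↥C) : ↥p).2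
        ((fb ⟨(j : ℕ), hjn⟩ : ↥C) : L)
        ((fb ⟨(j : ℕ), hjn⟩ : ↥C) : ↥p).2
      rw [hab]
      have h1 : f ⁅((fb ⟨(i : ℕ), hi⟩ : ↥C) : L), ((fb ⟨(j : ℕ), hjn⟩ : ↥C) : L)⁆ = 1 := by
        rw [← hωCapp]
        exact hfb _ _ (by simp only [Fin.mk_lt_mk]; exact hij)
      rw [h1, one_smul]
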